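/- If X is a real-valued random variable with E[X] = 0 and E[X^2] = 1, then the function F^X(s) = E[X(X - s) · 1{X ≤ s}] is nondecreasing, tends to 0 as s → -∞ and to 1 as s → +∞, i.e., F^X is a distribution function. -/

import Mathlib

open MeasureTheory Filter

theorem stmt_3 {Ω : Type*} [MeasurableSpace Ω] (μ : Measure Ω) [IsProbabilityMeasure μ]
    (X : Ω → ℝ) (hXmeas : Measurable X)
    (hX1 : Integrable X μ) (hX2 : Integrable (fun ω => (X ω) ^ 2) μ)
    (hmean : ∫ ω, X ω ∂μ = 0) (hvar : ∫ ω, (X ω) ^ 2 ∂μ = 1)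
    (F : ℝ → ℝ) (hF : ∀ s, F s = ∫ ω, (if X ω ≤ s then X ω * (X ω - s) else 0) ∂μ) :
    Monotone F ∧ Tendsto F atBot (nhds 0) ∧ Tendsto F atTop (nhds 1) := by
  have hset : ∀ s : ℝ, MeasurableSet {ω | X ω ≤ s} :=
    fun s => measurableSet_le hXmeas measurable_const
  have hmul : ∀ s : ℝ, Measurable fun ω => X ω * (X ω - s) :=
    fun s => hXmeas.mul (hXmeas.sub measurable_const)
  have hdom : ∀ s : ℝ, Integrable (fun ω => X ω ^ 2 + |s| * |X ω|) μ :=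
    fun s => hX2.add (hX1.abs.const_mul _)
  have habs : ∀ (s : ℝ) (ω : Ω), |X ω * (X ω - s)| ≤ X ω ^ 2 + |s| * |X ω| := by
    intro s ω
    have h1 : X ω * (X ω - s) = X ω ^ 2 - s * X ω := by ring
    calc |X ω * (X ω - s)| = |X ω ^ 2 - s * X ω| := by rw [h1]
      _ ≤ |X ω ^ 2| + |s * X ω| := abs_sub _ _
      _ = X ω ^ 2 + |s| * |X ω| := by rw [abs_of_nonneg (sq_nonneg _), abs_mul]
  -- integrability of the two pieces
  have hfint : ∀ s : ℝ, Integrable (fun ω => if X ω ≤ s then X ω * (X ω - s) else 0) μ := by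
    intro s
    refine (hdom s).mono
      ((Measurable.ite (hset s) (hmul s) measurable_const).aestronglyMeasurable)
      (ae_of_all _ fun ω => ?_)
    simp only [Real.norm_eq_abs]
    rw [abs_of_nonneg (by positivity : (0:ℝ) ≤ X ω ^ 2 + |s| * |X ω|)]
    split_ifs with h
    · exact habs s ω
    · simpa using (by positivity : (0:ℝ) ≤ X ω ^ 2 + |s| * |X ω|)
  have hgint : ∀ s : ℝ, Integrable (fun ω => if X ω ≤ s then 0 else X ω * (X ω - s)) μ := by
    intro s
    refine (hdom s).mono
      ((Measurable.ite (hset s) measurable_const (hmul s)).aestronglyMeasurable)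
      (ae_of_all _ fun ω => ?_)
    simp only [Real.norm_eq_abs]
    rw [abs_of_nonneg (by positivity : (0:ℝ) ≤ X ω ^ 2 + |s| * |X ω|)]
    split_ifs with h
    · simpa using (by positivity : (0:ℝ) ≤ X ω ^ 2 + |s| * |X ω|)
    · exact habs s ω
  -- the complement sum identity : F s + G s = 1
  have hsum : ∀ s : ℝ,
      F s + (∫ ω, (if X ω ≤ s then 0 else X ω * (X ω - s)) ∂μ) = 1 := by
    intro s
    rw [hF, ← integral_add (hfint s) (hgint s)]
    have heq : (fun ω => (if X ω ≤ s then X ω * (X ω - s) else 0) +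
        (if X ω ≤ s then 0 else X ω * (X ω - s)))
        = fun ω => X ω ^ 2 - s * X ω := by
      funext ω; split_ifs <;> ring
    rw [heq, integral_sub hX2 (hX1.const_mul s), integral_const_mul, hvar, hmean]
    ring
  -- truncated first moments
  have hXleint : ∀ s : ℝ, Integrable (fun ω => if X ω ≤ s then X ω else 0) μ := by
    intro s
    refine hX1.abs.mono
      ((Measurable.ite (hset s) hXmeas measurable_const).aestronglyMeasurable)
      (ae_of_all _ fun ω => ?_)
    simp only [Real.norm_eq_abs, abs_abs]
    split_ifs <;> simp [abs_nonneg]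
  have hXgtint : ∀ s : ℝ, Integrable (fun ω => if X ω ≤ s then 0 else X ω) μ := by
    intro s
    refine hX1.abs.mono
      ((Measurable.ite (hset s) measurable_const hXmeas).aestronglyMeasurable)
      (ae_of_all _ fun ω => ?_)
    simp only [Real.norm_eq_abs, abs_abs]
    split_ifs <;> simp [abs_nonneg]
  have hneg : ∀ s : ℝ, (∫ ω, (if X ω ≤ s then X ω else 0) ∂μ) ≤ 0 := by
    intro s
    rcases le_or_gt s 0 with hs | hs
    · refine integral_nonpos fun ω => ?_
      simp only [Pi.zero_apply]
      split_ifs with h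
      · exact h.trans hs
      · exact le_rfl
    · have heq : (fun ω => if X ω ≤ s then X ω else 0)
          = fun ω => X ω - (if X ω ≤ s then 0 else X ω) := by
        funext ω; split_ifs <;> ring
      rw [heq, integral_sub hX1 (hXgtint s), hmean]
      have : 0 ≤ ∫ ω, (if X ω ≤ s then 0 else X ω) ∂μ := by
        refine integral_nonneg fun ω => ?_
        simp only [Pi.zero_apply]
        split_ifs with h
        · exact le_rfl
        · linarith [not_le.mp h]
      linarith
  -- monotonicity on (-∞, 0]
  have hA : ∀ s t : ℝ, s ≤ t → t ≤ 0 → F s ≤ F t := by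
    intro s t hst ht0
    have h2int : Integrable
        (fun ω => if X ω ≤ s then 0 else (if X ω ≤ t then X ω * (X ω - t) else 0)) μ := by
      refine (hfint t).abs.mono
        ((Measurable.ite (hset s) measurable_const
          (Measurable.ite (hset t) (hmul t) measurable_const)).aestronglyMeasurable)
        (ae_of_all _ fun ω => ?_)
      simp only [Real.norm_eq_abs, abs_abs]
      split_ifs with h1 h2 <;> simp [abs_nonneg] <;> positivity
    have hdiff : F t - F s = (s - t) * (∫ ω, (if X ω ≤ s then X ω else 0) ∂μ) +
        ∫ ω, (if X ω ≤ s then 0 else (if X ω ≤ t then X ω * (X ω - t) else 0)) ∂μ := by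
      rw [hF t, hF s, ← integral_sub (hfint t) (hfint s), ← integral_const_mul,
        ← integral_add ((hXleint s).const_mul (s - t)) h2int]
      refine integral_congr_ae (ae_of_all _ fun ω => ?_)
      simp only
      split_ifs with h1 h2 h2
      · ring
      · ring
      · exact absurd (h2.trans hst) h1
      · ring
    have hterm1 : 0 ≤ (s - t) * (∫ ω, (if X ω ≤ s then X ω else 0) ∂μ) := by
      nlinarith [hneg s]
    have hterm2 : 0 ≤ ∫ ω, (if X ω ≤ s then 0 else (if X ω ≤ t then X ω * (X ω - t) else 0)) ∂μ := by
      refine integral_nonneg fun ω => ?_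
      simp only [Pi.zero_apply]
      split_ifs with h1 h2
      · exact le_rfl
      · nlinarith [h2.trans ht0]
      · exact le_rfl
    linarith
  -- monotonicity on [0, ∞)
  have hB : ∀ s t : ℝ, 0 ≤ s → s ≤ t → F s ≤ F t := by
    intro s t hs0 hst
    have hmono : (∫ ω, (if X ω ≤ t then 0 else X ω * (X ω - t)) ∂μ)
        ≤ ∫ ω, (if X ω ≤ s then 0 else X ω * (X ω - s)) ∂μ := by
      refine integral_mono (hgint t) (hgint s) fun ω => ?_
      simp only
      split_ifs with h1 h2 h2
      · exact le_rfl
      · exact mul_nonneg (by linarith [not_le.mp h2]) (by linarith [not_le.mp h2])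
      · exact absurd (h2.trans hst) h1
      · have hx : 0 < X ω := lt_of_le_of_lt hs0 (not_le.mp h2)
        exact mul_le_mul_of_nonneg_left (by linarith) hx.le
    linarith [hsum s, hsum t]
  refine ⟨?_, ?_, ?_⟩
  · intro s t hst
    rcases le_total t 0 with ht | ht
    · exact hA s t hst ht
    rcases le_total 0 s with hs | hs
    · exact hB s t hs hst
    · exact (hA s 0 hs le_rfl).trans (hB 0 t le_rfl ht)
  · -- limit at -∞
    have hFeq : F = fun s => ∫ ω, (if X ω ≤ s then X ω * (X ω - s) else 0) ∂μ := funext hF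
    rw [hFeq]
    have := tendsto_integral_filter_of_dominated_convergence (μ := μ)
      (F := fun (s : ℝ) ω => if X ω ≤ s then X ω * (X ω - s) else 0)
      (f := fun _ => (0:ℝ)) (l := atBot) (fun ω => X ω ^ 2)
      (Eventually.of_forall fun s => (hfint s).aestronglyMeasurable)
      (by
        filter_upwards [eventually_le_atBot (0:ℝ)] with s hs
        refine ae_of_all _ fun ω => ?_
        simp only [Real.norm_eq_abs]
        split_ifs with h
        · rw [abs_le]
          constructor <;> nlinarith
        · simpa using sq_nonneg (X ω))
      hX2
      (ae_of_all _ fun ω => by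
        have hev : ∀ᶠ s in atBot, (if X ω ≤ s then X ω * (X ω - s) else 0) = 0 := by
          filter_upwards [eventually_lt_atBot (X ω)] with s hs
          rw [if_neg (not_le.mpr hs)]
        exact Tendsto.congr' (EventuallyEq.symm hev) tendsto_const_nhds)
    simpa using this
  · -- limit at +∞
    have hG : Tendsto (fun s => ∫ ω, (if X ω ≤ s then 0 else X ω * (X ω - s)) ∂μ)
        atTop (nhds 0) := by
      have := tendsto_integral_filter_of_dominated_convergence (μ := μ)
        (F := fun (s : ℝ) ω => if X ω ≤ s then 0 else X ω * (X ω - s))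
        (f := fun _ => (0:ℝ)) (l := atTop) (fun ω => X ω ^ 2)
        (Eventually.of_forall fun s => (hgint s).aestronglyMeasurable)
        (by
          filter_upwards [eventually_ge_atTop (0:ℝ)] with s hs
          refine ae_of_all _ fun ω => ?_
          simp only [Real.norm_eq_abs]
          split_ifs with h
          · simpa using sq_nonneg (X ω)
          · have hx : s < X ω := not_le.mp h
            rw [abs_le]
            constructor <;> nlinarith)
        hX2
        (ae_of_all _ fun ω => by
          have hev : ∀ᶠ s in atTop, (if X ω ≤ s then (0:ℝ) else X ω * (X ω - s)) = 0 := by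
            filter_upwards [eventually_ge_atTop (X ω)] with s hs
            rw [if_pos hs]
          exact Tendsto.congr' (EventuallyEq.symm hev) tendsto_const_nhds)
      simpa using this
    have : Tendsto (fun s => 1 - ∫ ω, (if X ω ≤ s then 0 else X ω * (X ω - s)) ∂μ)
        atTop (nhds (1 - 0)) := tendsto_const_nhds.sub hG
    simpa using this.congr fun s => by linarith [hsum s]
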